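/- Let p ≥ 5 be a prime, let s, t : (ℤ/pℤ) ∖ {0} → ℂ satisfy s_{−a} = −s_a, t_{−a} = t_a, and the quadratic relations s_a s_b + s_b s_c + s_c s_a + t_a + t_b + t_c = 0 for all nonzero a, b, c with a + b + c = 0, and let (f_a)_{a≠0} be the standard solution, i.e., the unique family of formal power series f_a ∈ ℂ[[z]] with constant coefficient s_a, coefficient of z equal to t_a, satisfying −1 + z² f_a′ = −(1/(p−2)) ( Σ_{k≠0,a} (1 + z f_k)(1 + z f_{a−k}) + 2 s_a z (1 + z f_a) ). Then there exist constants C > 0 and c > 0 such that for every a and every n ≥ 0 the coefficient of z^n in f_a has absolute value at most C·c^n; in particular each f_a has positive radius of convergence. -/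

import Mathlib

open Finset PowerSeries

/-- A family `f` of formal power series (indexed by the nonzero residues mod p) is a
*standard solution* for the data `(s, t)` if each `f a` has constant coefficient `s a`,
coefficient of `z` equal to `t a`, and the family satisfies (as an identity in ℂ[[z]])
`−1 + z² f_a′ = −(1/(p−2)) ( Σ_{k≠0,a} (1 + z f_k)(1 + z f_{a−k}) + 2 s_a z (1 + z f_a) )`. -/
def IsStandardSolution (p : ℕ) [NeZero p] (s t : ZMod p → ℂ)
    (f : ZMod p → PowerSeries ℂ) : Prop :=
  ∀ a : ZMod p, a ≠ 0 →
    PowerSeries.constantCoeff (f a) = s a ∧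
    PowerSeries.coeff 1 (f a) = t a ∧
    -1 + PowerSeries.X ^ 2 * PowerSeries.derivative ℂ (f a) =
      PowerSeries.C (-(1 / ((p : ℂ) - 2))) *
        ((∑ k ∈ univ.filter (fun k : ZMod p => k ≠ 0 ∧ k ≠ a),
            (1 + PowerSeries.X * f k) * (1 + PowerSeries.X * f (a - k))) +
          2 * PowerSeries.C (s a) * PowerSeries.X * (1 + PowerSeries.X * f a))

lemma coeff_prod_aux (F G : ℂ⟦X⟧) (m : ℕ) :
    PowerSeries.coeff (m+3) ((1 + PowerSeries.X*F)*(1+PowerSeries.X*G)) =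
      PowerSeries.coeff (m+2) F + PowerSeries.coeff (m+2) G + PowerSeries.coeff (m+1) (F*G) := by
  have h : (1 + PowerSeries.X*F)*(1+PowerSeries.X*G)
      = 1 + PowerSeries.X*F + PowerSeries.X*G + PowerSeries.X^2*(F*G) := by ring
  rw [h, map_add, map_add, map_add]
  rw [show m+3 = (m+1)+2 from rfl, PowerSeries.coeff_X_pow_mul]
  rw [show (m+1)+2 = (m+2)+1 from rfl, PowerSeries.coeff_succ_X_mul, PowerSeries.coeff_succ_X_mul]
  simp

lemma coeff_lin_aux (F : ℂ⟦X⟧) (σ : ℂ) (m : ℕ) :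
    PowerSeries.coeff (m+3) (2 * PowerSeries.C σ * PowerSeries.X * (1 + PowerSeries.X * F)) =
      2 * σ * PowerSeries.coeff (m+1) F := by
  have h : 2 * PowerSeries.C σ * PowerSeries.X * (1 + PowerSeries.X * F)
      = PowerSeries.X * (PowerSeries.C (2*σ)) + PowerSeries.X^2 * (PowerSeries.C (2*σ) * F) := by
    rw [map_mul, map_ofNat]; ring
  rw [h, map_add]
  rw [show m+3 = (m+2)+1 from rfl, PowerSeries.coeff_succ_X_mul]
  rw [show (m+2)+1 = (m+1)+2 from rfl, PowerSeries.coeff_X_pow_mul, PowerSeries.coeff_C_mul,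
    PowerSeries.coeff_C]
  simp

lemma coeff_lhs_aux (F : ℂ⟦X⟧) (m : ℕ) :
    PowerSeries.coeff (m+3) (-1 + PowerSeries.X^2 * PowerSeries.derivative ℂ F) =
      ((m:ℂ)+2) * PowerSeries.coeff (m+2) F := by
  rw [map_add, show m+3 = (m+1)+2 from rfl, PowerSeries.coeff_X_pow_mul, PowerSeries.coeff_derivative]
  push_cast
  simp
  ring

/-- The lower-order data entering the recurrence. -/
noncomputable def Zt (p : ℕ) [NeZero p] (s : ZMod p → ℂ) (f : ZMod p → PowerSeries ℂ)
    (a : ZMod p) (m : ℕ) : ℂ :=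
  (∑ k ∈ univ.filter (fun k : ZMod p => k ≠ 0 ∧ k ≠ a),
      PowerSeries.coeff (m+1) (f k * f (a-k))) +
    2 * s a * PowerSeries.coeff (m+1) (f a)

lemma card_F (p : ℕ) [NeZero p] :
    (univ.filter (fun k : ZMod p => k ≠ 0)).card = p - 1 := by
  rw [Finset.filter_ne', Finset.card_erase_of_mem (mem_univ _), Finset.card_univ, ZMod.card]

lemma Fa_eq (p : ℕ) [NeZero p] (a : ZMod p) :
    univ.filter (fun k : ZMod p => k ≠ 0 ∧ k ≠ a)
      = (univ.filter (fun k : ZMod p => k ≠ 0)).erase a := by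
  ext k; simp [Finset.mem_erase, and_comm]

lemma card_Fa (p : ℕ) [NeZero p] (a : ZMod p) (ha : a ≠ 0) :
    (univ.filter (fun k : ZMod p => k ≠ 0 ∧ k ≠ a)).card = p - 2 := by
  rw [Fa_eq, Finset.card_erase_of_mem, card_F]
  · omega
  · simp [ha]

lemma aux_key (p : ℕ) [NeZero p] (hp5 : 5 ≤ p) (s t : ZMod p → ℂ)
    (f : ZMod p → PowerSeries ℂ) (hf : IsStandardSolution p s t f)
    (a : ZMod p) (ha : a ≠ 0) (m : ℕ) :
    (((p:ℂ)-2) * ((m:ℂ)+2) - 2) * PowerSeries.coeff (m+2) (f a)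
      = -(2 * (∑ k ∈ univ.filter (fun k : ZMod p => k ≠ 0), PowerSeries.coeff (m+2) (f k))
          + Zt p s f a m) := by
  have hd : ((p:ℂ) - 2) ≠ 0 := by
    have : ((p:ℂ) - 2) = (((p:ℝ) - 2 : ℝ) : ℂ) := by push_cast; ring
    rw [this]
    simp only [ne_eq, Complex.ofReal_eq_zero]
    have : (5:ℝ) ≤ (p:ℝ) := by exact_mod_cast hp5
    nlinarith
  have h := congrArg (PowerSeries.coeff (m+3)) (hf a ha).2.2
  rw [coeff_lhs_aux, PowerSeries.coeff_C_mul, map_add, map_sum] at h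
  simp only [coeff_prod_aux, coeff_lin_aux] at h
  rw [Finset.sum_add_distrib, Finset.sum_add_distrib] at h
  have hbij : (∑ k ∈ univ.filter (fun k : ZMod p => k ≠ 0 ∧ k ≠ a),
        PowerSeries.coeff (m+2) (f (a-k)))
      = ∑ k ∈ univ.filter (fun k : ZMod p => k ≠ 0 ∧ k ≠ a),
        PowerSeries.coeff (m+2) (f k) := by
    apply Finset.sum_nbij' (fun k => a - k) (fun k => a - k)
    · intro k hk
      simp only [Finset.mem_filter, Finset.mem_univ, true_and] at hk ⊢
      exact ⟨sub_ne_zero.mpr (Ne.symm hk.2), fun hc => hk.1 (sub_eq_self.mp hc)⟩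
    · intro k hk
      simp only [Finset.mem_filter, Finset.mem_univ, true_and] at hk ⊢
      exact ⟨sub_ne_zero.mpr (Ne.symm hk.2), fun hc => hk.1 (sub_eq_self.mp hc)⟩
    · intro k _; exact sub_sub_cancel a k
    · intro k _; exact sub_sub_cancel a k
    · intro k _; rfl
  rw [hbij] at h
  have hFaS : (∑ k ∈ univ.filter (fun k : ZMod p => k ≠ 0 ∧ k ≠ a),
        PowerSeries.coeff (m+2) (f k))
      = (∑ k ∈ univ.filter (fun k : ZMod p => k ≠ 0), PowerSeries.coeff (m+2) (f k))
        - PowerSeries.coeff (m+2) (f a) := by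
    rw [Fa_eq]
    exact Finset.sum_erase_eq_sub (by simp [ha])
  rw [hFaS] at h
  have hr : ((p:ℂ)-2) * (-(1/((p:ℂ)-2))) = -1 := by field_simp
  simp only [Zt]
  linear_combination ((p:ℂ)-2) * h +
    (2 * ((∑ k ∈ univ.filter (fun k : ZMod p => k ≠ 0), PowerSeries.coeff (m+2) (f k))
        - PowerSeries.coeff (m+2) (f a))
      + (∑ k ∈ univ.filter (fun k : ZMod p => k ≠ 0 ∧ k ≠ a),
          PowerSeries.coeff (m+1) (f k * f (a-k)))
      + 2 * s a * PowerSeries.coeff (m+1) (f a)) * hr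

lemma aux_key3 (p : ℕ) [NeZero p] (hp5 : 5 ≤ p) (s t : ZMod p → ℂ)
    (f : ZMod p → PowerSeries ℂ) (hf : IsStandardSolution p s t f) (m : ℕ) :
    (((p:ℂ)-2) * ((m:ℂ)+4)) *
        (∑ k ∈ univ.filter (fun k : ZMod p => k ≠ 0), PowerSeries.coeff (m+2) (f k))
      = -(∑ a ∈ univ.filter (fun k : ZMod p => k ≠ 0), Zt p s f a m) := by
  have h := Finset.sum_congr rfl
    (fun a (ha' : a ∈ univ.filter (fun k : ZMod p => k ≠ 0)) =>
      aux_key p hp5 s t f hf a (by simpa using ha') m)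
  rw [← Finset.mul_sum] at h
  rw [show (∑ a ∈ univ.filter (fun k : ZMod p => k ≠ 0),
      -(2 * (∑ k ∈ univ.filter (fun k : ZMod p => k ≠ 0), PowerSeries.coeff (m+2) (f k))
        + Zt p s f a m))
    = -(∑ a ∈ univ.filter (fun k : ZMod p => k ≠ 0),
      (2 * (∑ k ∈ univ.filter (fun k : ZMod p => k ≠ 0), PowerSeries.coeff (m+2) (f k))
        + Zt p s f a m)) from by rw [Finset.sum_neg_distrib]] at h
  rw [Finset.sum_add_distrib, Finset.sum_const, card_F, nsmul_eq_mul] at h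
  have h1p : 1 ≤ p := by omega
  rw [Nat.cast_sub h1p, Nat.cast_one] at h
  linear_combination h

set_option maxHeartbeats 1000000 in
/-- The coefficients of the standard solution grow at most geometrically;
in particular each `f a` has positive radius of convergence. -/
theorem statement9 (p : ℕ) (hp : p.Prime) (hp5 : 5 ≤ p) [NeZero p]
    (s t : ZMod p → ℂ)
    (hodd : ∀ a : ZMod p, a ≠ 0 → s (-a) = - s a)
    (heven : ∀ a : ZMod p, a ≠ 0 → t (-a) = t a)
    (hquad : ∀ a b c : ZMod p, a ≠ 0 → b ≠ 0 → c ≠ 0 → a + b + c = 0 →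
      s a * s b + s b * s c + s c * s a + t a + t b + t c = 0)
    (f : ZMod p → PowerSeries ℂ) (hf : IsStandardSolution p s t f) :
    ∃ C > (0 : ℝ), ∃ c > (0 : ℝ), ∀ a : ZMod p, a ≠ 0 → ∀ n : ℕ,
      ‖PowerSeries.coeff n (f a)‖ ≤ C * c ^ n := by
  classical
  set Cc : ℝ := 1 + ∑ a : ZMod p, (‖s a‖ + ‖t a‖) with hCcdef
  have hsum0 : (0:ℝ) ≤ ∑ a : ZMod p, (‖s a‖ + ‖t a‖) :=
    Finset.sum_nonneg (fun a _ => by positivity)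
  have hC1 : 1 ≤ Cc := by rw [hCcdef]; linarith
  have hC0 : 0 < Cc := by linarith
  have hCs : ∀ a : ZMod p, ‖s a‖ ≤ Cc := by
    intro a
    have h := Finset.single_le_sum (f := fun a : ZMod p => ‖s a‖ + ‖t a‖)
      (fun i _ => by positivity) (Finset.mem_univ a)
    have h' : ‖s a‖ + ‖t a‖
        ≤ ∑ a : ZMod p, (‖s a‖ + ‖t a‖) := h
    rw [hCcdef]
    linarith [norm_nonneg (t a)]
  have hCt : ∀ a : ZMod p, ‖t a‖ ≤ Cc := by
    intro a
    have h := Finset.single_le_sum (f := fun a : ZMod p => ‖s a‖ + ‖t a‖)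
      (fun i _ => by positivity) (Finset.mem_univ a)
    have h' : ‖s a‖ + ‖t a‖
        ≤ ∑ a : ZMod p, (‖s a‖ + ‖t a‖) := h
    rw [hCcdef]
    linarith [norm_nonneg (s a)]
  have hpR : (5:ℝ) ≤ (p:ℝ) := by exact_mod_cast hp5
  set c : ℝ := 4 * (p:ℝ) * Cc with hcdef
  have hc1 : 1 ≤ c := by rw [hcdef]; nlinarith
  have hc0 : 0 < c := by linarith
  refine ⟨Cc, hC0, c, hc0, ?_⟩
  have main : ∀ n : ℕ, ∀ a : ZMod p, a ≠ 0 →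
      ‖PowerSeries.coeff n (f a)‖ ≤ Cc * c ^ n := by
    intro n
    induction n using Nat.strong_induction_on with
    | _ n ih =>
      intro a ha
      match n, ih with
      | 0, _ =>
        rw [PowerSeries.coeff_zero_eq_constantCoeff_apply, (hf a ha).1, pow_zero, mul_one]
        exact hCs a
      | 1, _ =>
        rw [(hf a ha).2.1, pow_one]
        have := hCt a
        nlinarith [hCt a, mul_nonneg hC0.le (show (0:ℝ) ≤ c - 1 by linarith)]
      | (m+2), ih =>
        have hdR0 : (0:ℝ) < (p:ℝ) - 2 := by linarith
        have hM0 : (0:ℝ) ≤ (m:ℝ) := Nat.cast_nonneg m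
        have hx0 : (0:ℝ) < Cc^2 * c^(m+1) := mul_pos (pow_pos hC0 2) (pow_pos hc0 (m+1))
        set x : ℝ := Cc^2 * c^(m+1) with hxdef
        set B : ℝ := ((p:ℝ)-2) * (((m:ℝ)+2) * x) + 2 * x with hBdef
        have hB0 : 0 ≤ B := by
          rw [hBdef]
          linarith [mul_nonneg (mul_nonneg hdR0.le (show (0:ℝ) ≤ (m:ℝ)+2 by linarith)) hx0.le, hx0.le]
        -- bound on the lower-order data
        have hZb : ∀ b : ZMod p, b ≠ 0 → ‖Zt p s f b m‖ ≤ B := by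
          intro b hb
          have hq : ‖∑ k ∈ univ.filter (fun k : ZMod p => k ≠ 0 ∧ k ≠ b),
              PowerSeries.coeff (m+1) (f k * f (b-k))‖ ≤ ((p:ℝ)-2) * (((m:ℝ)+2) * x) := by
            refine le_trans (norm_sum_le _ _) ?_
            have hterm : ∀ k ∈ univ.filter (fun k : ZMod p => k ≠ 0 ∧ k ≠ b),
                ‖PowerSeries.coeff (m+1) (f k * f (b-k))‖ ≤ ((m:ℝ)+2) * x := by
              intro k hk
              simp only [Finset.mem_filter, Finset.mem_univ, true_and] at hk
              rw [PowerSeries.coeff_mul]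
              refine le_trans (norm_sum_le _ _) ?_
              have hterm2 : ∀ ij ∈ Finset.HasAntidiagonal.antidiagonal (m+1),
                  ‖PowerSeries.coeff ij.1 (f k) *
                    PowerSeries.coeff ij.2 (f (b-k))‖ ≤ x := by
                intro ij hij
                rw [Finset.HasAntidiagonal.mem_antidiagonal] at hij
                rw [norm_mul]
                have h1 := ih ij.1 (by omega) k hk.1
                have h2 := ih ij.2 (by omega) (b-k) (sub_ne_zero.mpr (Ne.symm hk.2))
                calc ‖PowerSeries.coeff ij.1 (f k)‖ *
                      ‖PowerSeries.coeff ij.2 (f (b-k))‖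
                    ≤ (Cc * c^ij.1) * (Cc * c^ij.2) := by
                      have := norm_nonneg (PowerSeries.coeff ij.1 (f k))
                      have := norm_nonneg (PowerSeries.coeff ij.2 (f (b-k)))
                      have hcp : (0:ℝ) < Cc * c^ij.2 := mul_pos hC0 (pow_pos hc0 _)
                      nlinarith
                  _ = x := by rw [hxdef, ← hij, pow_add]; ring
              refine le_trans (Finset.sum_le_sum hterm2) ?_
              rw [Finset.sum_const, Finset.Nat.card_antidiagonal, nsmul_eq_mul]
              exact le_of_eq (by push_cast; ring)
            refine le_trans (Finset.sum_le_sum hterm) ?_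
            rw [Finset.sum_const, card_Fa p b hb, nsmul_eq_mul]
            rw [show ((p-2:ℕ):ℝ) = (p:ℝ)-2 from by
              rw [Nat.cast_sub (by omega)]; push_cast; ring]
          have hw : ‖2 * s b * PowerSeries.coeff (m+1) (f b)‖ ≤ 2 * x := by
            rw [norm_mul, norm_mul, Complex.norm_two]
            have h1 := hCs b
            have h2 := ih (m+1) (by omega) b hb
            rw [hxdef]
            nlinarith [norm_nonneg (s b),
              norm_nonneg (PowerSeries.coeff (m+1) (f b)),
              pow_pos hc0 (m+1)]
          calc ‖Zt p s f b m‖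
              ≤ ‖∑ k ∈ univ.filter (fun k : ZMod p => k ≠ 0 ∧ k ≠ b),
                  PowerSeries.coeff (m+1) (f k * f (b-k))‖
                + ‖2 * s b * PowerSeries.coeff (m+1) (f b)‖ := by
                simp only [Zt]; exact norm_add_le _ _
            _ ≤ B := by rw [hBdef]; linarith
        -- bound on the sum S
        have habs2 : (((p:ℝ)-2)*((m:ℝ)+4)) *
            ‖∑ k ∈ univ.filter (fun k : ZMod p => k ≠ 0),
              PowerSeries.coeff (m+2) (f k)‖ ≤ ((p:ℝ)-1) * B := by
          have hc2 : ‖((p:ℂ)-2)*((m:ℂ)+4)‖ = ((p:ℝ)-2)*((m:ℝ)+4) := by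
            rw [show ((p:ℂ)-2)*((m:ℂ)+4) = ((((p:ℝ)-2)*((m:ℝ)+4) : ℝ) : ℂ) from by
              push_cast; ring, Complex.norm_real, Real.norm_eq_abs, abs_of_pos (by nlinarith)]
          have heq : (((p:ℝ)-2)*((m:ℝ)+4)) *
              ‖∑ k ∈ univ.filter (fun k : ZMod p => k ≠ 0),
                PowerSeries.coeff (m+2) (f k)‖
              = ‖∑ b ∈ univ.filter (fun k : ZMod p => k ≠ 0), Zt p s f b m‖ := by
            rw [← hc2, ← norm_mul, aux_key3 p hp5 s t f hf m, norm_neg]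
          rw [heq]
          refine le_trans (norm_sum_le _ _) ?_
          refine le_trans (Finset.sum_le_sum (fun b hb => hZb b (by simpa using hb))) ?_
          rw [Finset.sum_const, card_F, nsmul_eq_mul]
          rw [show ((p-1:ℕ):ℝ) = (p:ℝ)-1 from by
            rw [Nat.cast_sub (by omega)]; push_cast; ring]
        -- bound from the equation for a
        have habs1 : (((p:ℝ)-2)*((m:ℝ)+2) - 2) *
            ‖PowerSeries.coeff (m+2) (f a)‖
            ≤ 2 * ‖∑ k ∈ univ.filter (fun k : ZMod p => k ≠ 0),
                PowerSeries.coeff (m+2) (f k)‖ + B := by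
          have hc2 : ‖((p:ℂ)-2)*((m:ℂ)+2)-2‖ = ((p:ℝ)-2)*((m:ℝ)+2)-2 := by
            rw [show ((p:ℂ)-2)*((m:ℂ)+2)-2 = ((((p:ℝ)-2)*((m:ℝ)+2)-2 : ℝ) : ℂ) from by
              push_cast; ring, Complex.norm_real, Real.norm_eq_abs, abs_of_pos (by nlinarith)]
          have heq : (((p:ℝ)-2)*((m:ℝ)+2)-2) *
              ‖PowerSeries.coeff (m+2) (f a)‖
              = ‖2 * (∑ k ∈ univ.filter (fun k : ZMod p => k ≠ 0),
                  PowerSeries.coeff (m+2) (f k)) + Zt p s f a m‖ := by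
            rw [← hc2, ← norm_mul, aux_key p hp5 s t f hf a ha m, norm_neg]
          rw [heq]
          refine le_trans (norm_add_le _ _) ?_
          rw [norm_mul, Complex.norm_two]
          linarith [hZb a ha]
        -- final arithmetic
        set A : ℝ := ‖PowerSeries.coeff (m+2) (f a)‖ with hAdef
        set S' : ℝ := ‖∑ k ∈ univ.filter (fun k : ZMod p => k ≠ 0),
          PowerSeries.coeff (m+2) (f k)‖ with hSdef
        have hA0 : 0 ≤ A := norm_nonneg _
        have hS0 : 0 ≤ S' := norm_nonneg _
        have s1 : 4 * S' ≤ ((p:ℝ)-2) * B := by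
          have h4 : ((p:ℝ)-2) * (4 * S') ≤ ((p:ℝ)-2) * (((p:ℝ)-2) * B) := by
            linarith only [habs2, mul_nonneg (mul_nonneg hdR0.le hM0) hS0,
              mul_nonneg (show (0:ℝ) ≤ (p:ℝ)^2 - 5*(p:ℝ) + 5 by nlinarith) hB0]
          exact (mul_le_mul_iff_right₀ hdR0).mp h4
        have s3 : ((m:ℝ)+1) * A ≤ B := by
          have h5 : ((p:ℝ)-2) * (((m:ℝ)+1) * A) ≤ ((p:ℝ)-2) * B := by
            linarith only [habs1, s1, mul_nonneg (show (0:ℝ) ≤ (p:ℝ)-4 by linarith) hA0,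
              mul_nonneg (show (0:ℝ) ≤ (p:ℝ)-4 by linarith) hB0]
          exact (mul_le_mul_iff_right₀ hdR0).mp h5
        have s5 : A ≤ (2*((p:ℝ)-2)+2) * x := by
          have h6 : ((m:ℝ)+1) * A ≤ ((m:ℝ)+1) * ((2*((p:ℝ)-2)+2) * x) := by
            rw [hBdef] at s3
            linarith only [s3, mul_nonneg (mul_nonneg hdR0.le hM0) hx0.le,
              mul_nonneg hM0 hx0.le]
          exact (mul_le_mul_iff_right₀ (show (0:ℝ) < (m:ℝ)+1 by linarith)).mp h6
        have hxc : Cc * c^(m+2) = 4*(p:ℝ)*x := by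
          rw [hxdef, pow_succ, hcdef]; ring
        rw [hxc]
        linarith only [s5, mul_nonneg (show (0:ℝ) ≤ 2*(p:ℝ)+2 by linarith) hx0.le]
  intro a ha n
  exact main n a ha
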